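/- For subspaces p, q, r of a finite-dimensional complex inner product space H, dim α(p,q,r) ≤ dim(H)/2, where α(p,q,r) = (a ⊔ b) ⊓ (aᗮ ⊔ bᗮ) with a = p ⊔ (q ⊓ r) and b = (p ⊔ q) ⊓ (p ⊔ r). -/

import Mathlib

theorem dim_alpha_le_half {H : Type*} [NormedAddCommGroup H] [InnerProductSpace ℂ H]
    [FiniteDimensional ℂ H] (p q r : Submodule ℂ H) :
    Module.finrank ℂ ↥(((p ⊔ (q ⊓ r)) ⊔ ((p ⊔ q) ⊓ (p ⊔ r))) ⊓ ((p ⊔ (q ⊓ r))ᗮ ⊔ ((p ⊔ q) ⊓ (p ⊔ r))ᗮ)) ≤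
      Module.finrank ℂ H / 2 := by
  set n := Module.finrank ℂ H with hn
  set a := p ⊔ (q ⊓ r) with ha
  set b := (p ⊔ q) ⊓ (p ⊔ r) with hb
  have hab : a ≤ b := sup_le (le_inf le_sup_left le_sup_left)
    (le_inf (inf_le_left.trans le_sup_right) (inf_le_right.trans le_sup_right))
  have h1 : a ⊔ b = b := sup_eq_right.2 hab
  have h2 : aᗮ ⊔ bᗮ = aᗮ := sup_eq_left.2 (Submodule.orthogonal_le hab)
  rw [h1, h2]
  set c := (p ⊓ q) ⊔ (p ⊓ r) with hc
  set d := p ⊓ (q ⊔ r) with hd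
  have hcd : c ≤ d := sup_le (le_inf inf_le_left (inf_le_right.trans le_sup_left))
    (le_inf inf_le_left (inf_le_right.trans le_sup_right))
  set S := b ⊓ aᗮ with hS
  set S' := d ⊓ cᗮ with hS'
  -- dimension of S
  have hatop : a ⊔ aᗮ = ⊤ := Submodule.sup_orthogonal_of_hasOrthogonalProjection
  have hbtop : b ⊔ aᗮ = ⊤ := top_unique (hatop ▸ sup_le_sup_right hab _)
  have eS : Module.finrank ℂ (b ⊔ aᗮ : Submodule ℂ H) + Module.finrank ℂ S =
      Module.finrank ℂ b + Module.finrank ℂ aᗮ :=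
    Submodule.finrank_sup_add_finrank_inf_eq b aᗮ
  rw [hbtop, finrank_top] at eS
  have eao : Module.finrank ℂ a + Module.finrank ℂ aᗮ = n :=
    Submodule.finrank_add_finrank_orthogonal a
  -- dimension of S'
  have hctop : c ⊔ cᗮ = ⊤ := Submodule.sup_orthogonal_of_hasOrthogonalProjection
  have hdtop : d ⊔ cᗮ = ⊤ := top_unique (hctop ▸ sup_le_sup_right hcd _)
  have eS' : Module.finrank ℂ (d ⊔ cᗮ : Submodule ℂ H) + Module.finrank ℂ S' =
      Module.finrank ℂ d + Module.finrank ℂ cᗮ :=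
    Submodule.finrank_sup_add_finrank_inf_eq d cᗮ
  rw [hdtop, finrank_top] at eS'
  have eco : Module.finrank ℂ c + Module.finrank ℂ cᗮ = n :=
    Submodule.finrank_add_finrank_orthogonal c
  -- S and S' are disjoint
  have hSp : S ≤ pᗮ := inf_le_right.trans (Submodule.orthogonal_le le_sup_left)
  have hS'p : S' ≤ p := inf_le_left.trans inf_le_left
  have hdisj : S ⊓ S' = ⊥ := by
    refine le_bot_iff.1 ?_
    intro x hx
    exact ((Submodule.orthogonal_disjoint p).symm).le_bot ⟨hSp hx.1, hS'p hx.2⟩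
  have eSum : Module.finrank ℂ (S ⊔ S' : Submodule ℂ H) + Module.finrank ℂ (S ⊓ S' : Submodule ℂ H) =
      Module.finrank ℂ S + Module.finrank ℂ S' :=
    Submodule.finrank_sup_add_finrank_inf_eq S S'
  rw [hdisj] at eSum
  have hbot : Module.finrank ℂ (⊥ : Submodule ℂ H) = 0 := finrank_bot ℂ H
  have hle : Module.finrank ℂ (S ⊔ S' : Submodule ℂ H) ≤ n :=
    Submodule.finrank_le _
  -- the inclusion-exclusion identities for pairs
  have epq : Module.finrank ℂ (p ⊔ q : Submodule ℂ H) + Module.finrank ℂ (p ⊓ q : Submodule ℂ H) =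
      Module.finrank ℂ p + Module.finrank ℂ q := Submodule.finrank_sup_add_finrank_inf_eq p q
  have epr : Module.finrank ℂ (p ⊔ r : Submodule ℂ H) + Module.finrank ℂ (p ⊓ r : Submodule ℂ H) =
      Module.finrank ℂ p + Module.finrank ℂ r := Submodule.finrank_sup_add_finrank_inf_eq p r
  have eqr : Module.finrank ℂ (q ⊔ r : Submodule ℂ H) + Module.finrank ℂ (q ⊓ r : Submodule ℂ H) =
      Module.finrank ℂ q + Module.finrank ℂ r := Submodule.finrank_sup_add_finrank_inf_eq q r
  -- finrank b : (p⊔q) ⊓ (p⊔r), with (p⊔q) ⊔ (p⊔r) = p ⊔ q ⊔ r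
  have eb : Module.finrank ℂ ((p ⊔ q) ⊔ (p ⊔ r) : Submodule ℂ H) + Module.finrank ℂ b =
      Module.finrank ℂ (p ⊔ q : Submodule ℂ H) + Module.finrank ℂ (p ⊔ r : Submodule ℂ H) :=
    Submodule.finrank_sup_add_finrank_inf_eq (p ⊔ q) (p ⊔ r)
  have hsup3 : (p ⊔ q) ⊔ (p ⊔ r) = p ⊔ (q ⊔ r) := by
    rw [sup_sup_sup_comm, sup_idem]
  rw [hsup3] at eb
  -- finrank a : p ⊔ (q ⊓ r), with p ⊓ (q ⊓ r) containing... use formula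
  have ea : Module.finrank ℂ a + Module.finrank ℂ (p ⊓ (q ⊓ r) : Submodule ℂ H) =
      Module.finrank ℂ p + Module.finrank ℂ (q ⊓ r : Submodule ℂ H) :=
    Submodule.finrank_sup_add_finrank_inf_eq p (q ⊓ r)
  -- finrank c
  have ec : Module.finrank ℂ c + Module.finrank ℂ ((p ⊓ q) ⊓ (p ⊓ r) : Submodule ℂ H) =
      Module.finrank ℂ (p ⊓ q : Submodule ℂ H) + Module.finrank ℂ (p ⊓ r : Submodule ℂ H) :=
    Submodule.finrank_sup_add_finrank_inf_eq (p ⊓ q) (p ⊓ r)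
  have hinf3 : (p ⊓ q) ⊓ (p ⊓ r) = p ⊓ (q ⊓ r) := by
    rw [inf_inf_inf_comm, inf_idem]
  rw [hinf3] at ec
  -- finrank d
  have ed : Module.finrank ℂ (p ⊔ (q ⊔ r) : Submodule ℂ H) + Module.finrank ℂ d =
      Module.finrank ℂ p + Module.finrank ℂ (q ⊔ r : Submodule ℂ H) :=
    Submodule.finrank_sup_add_finrank_inf_eq p (q ⊔ r)
  omega
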